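/- Let A be a finite-dimensional connected graded Poincaré algebra of top degree N over a field k. Let E₁ and E₂ be graded unital subalgebras of A which are themselves connected Poincaré algebras with respect to the induced grading, and assume A is free as a left module over E₁ and as a left module over E₂. Let M be a finitely generated graded left A-module (a ℤ-graded k-vector space M = ⊕_j ℳ j with 𝒜 i • ℳ j ⊆ ℳ (i+j), bounded below) which is free as a left E₁-module and free as a left E₂-module. Suppose there are nonzero homogeneous elements t₁ ∈ E₁ and t₂ ∈ E₂ with deg t₁ + deg t₂ = N, and suppose that every nonzero homogeneous element y of E₂ of positive degree satisfies deg y > deg t₁, except possibly for the nonzero scalar multiples of one fixed homogeneous element z ∈ E₂ satisfying z² = 0, z·t₁ ∈ E₁ and z·t₁ ≠ 0. Then M is a free left A-module. -/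

import Mathlib

/-- `A` is a finite-dimensional connected graded Poincaré algebra of top degree `n`
with respect to the grading `𝒜`: it is connected (`𝒜 0 = k·1`), vanishes above
degree `n`, and there is a linear functional `e : A → k` vanishing on `𝒜 m` for
`m ≠ n` such that for each `q ≤ n` the pairing
`𝒜 q × 𝒜 (n - q) → k, (x, y) ↦ e (x * y)` is nondegenerate (on both sides). -/
def IsConnectedPoincare (k A : Type*) [Field k] [Ring A] [Algebra k A]
    (𝒜 : ℕ → Submodule k A) (n : ℕ) : Prop :=
  𝒜 0 = Submodule.span k ({1} : Set A) ∧
  (∀ m, n < m → 𝒜 m = ⊥) ∧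
  ∃ e : A →ₗ[k] k,
    (∀ m, m ≠ n → ∀ x ∈ 𝒜 m, e x = 0) ∧
    ∀ q, q ≤ n →
      (∀ x ∈ 𝒜 q, x ≠ 0 → ∃ y ∈ 𝒜 (n - q), e (x * y) ≠ 0) ∧
      (∀ y ∈ 𝒜 (n - q), y ≠ 0 → ∃ x ∈ 𝒜 q, e (x * y) ≠ 0)

/-- A graded unital subalgebra `E` of the graded algebra `A` is a connected Poincaré
algebra of top degree `nE` for the induced grading (with components `E ∩ 𝒜 j`):
its degree-zero part consists of the scalar multiples of `1`, its components vanish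
above degree `nE`, and there is a `k`-linear functional (given here as a functional
on `A`, only its restriction to `E` matters) vanishing on `E ∩ 𝒜 m` for `m ≠ nE`
such that for each `q ≤ nE` the multiplication pairing
`(E ∩ 𝒜 q) × (E ∩ 𝒜 (nE - q)) → k` is nondegenerate on both sides. -/
def SubalgebraIsConnectedPoincare (k A : Type*) [Field k] [Ring A] [Algebra k A]
    (𝒜 : ℕ → Submodule k A) (E : Subalgebra k A) (nE : ℕ) : Prop :=
  (∀ x ∈ E, x ∈ 𝒜 0 → ∃ c : k, x = c • (1 : A)) ∧
  (∀ j, nE < j → ∀ x ∈ E, x ∈ 𝒜 j → x = 0) ∧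
  ∃ e : A →ₗ[k] k,
    (∀ m, m ≠ nE → ∀ x ∈ E, x ∈ 𝒜 m → e x = 0) ∧
    ∀ q, q ≤ nE →
      (∀ x ∈ E, x ∈ 𝒜 q → x ≠ 0 → ∃ y ∈ E, y ∈ 𝒜 (nE - q) ∧ e (x * y) ≠ 0) ∧
      (∀ y ∈ E, y ∈ 𝒜 (nE - q) → y ≠ 0 → ∃ x ∈ E, x ∈ 𝒜 q ∧ e (x * y) ≠ 0)

set_option linter.unusedSectionVars false

section Gproj
variable {k M : Type*} [Semiring k] [AddCommMonoid M] [Module k M]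
variable {ι : Type*} [DecidableEq ι] (ℳ : ι → Submodule k M) [DirectSum.Decomposition ℳ]

/-- Projection onto the degree-`j` component, as a linear map. -/
def gproj (j : ι) : M →ₗ[k] M where
  toFun x := (DirectSum.decompose ℳ x j : M)
  map_add' x y := by
    simp only [DirectSum.decompose_add, DirectSum.add_apply, Submodule.coe_add]
  map_smul' c x := by
    simp only [DirectSum.decompose_smul, DirectSum.smul_apply, SetLike.val_smul, RingHom.id_apply]

@[simp] lemma gproj_apply (j : ι) (x : M) :
    gproj ℳ j x = (DirectSum.decompose ℳ x j : M) := rfl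

end Gproj

open DirectSum

section PartA
variable {k A : Type*} [Field k] [Ring A] [Algebra k A]
variable (𝒜 : ℕ → Submodule k A) [GradedAlgebra 𝒜]

lemma zero_comp_mul (x y : A) :
    (decompose 𝒜 (x * y) 0 : A) = (decompose 𝒜 x 0 : A) * (decompose 𝒜 y 0 : A) := by
  have := map_mul (GradedRing.projZeroRingHom 𝒜) x y
  simpa [GradedRing.projZeroRingHom] using this

lemma zero_comp_of_homog_mul_eq_zero {q : ℕ} {u f : A}
    (hconn : 𝒜 0 = Submodule.span k ({1} : Set A))
    (hu : u ∈ 𝒜 q) (hu0 : u ≠ 0) (h : u * f = 0) :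
    (decompose 𝒜 f 0 : A) = 0 := by
  have h1 : (decompose 𝒜 (u * f) q : A) = u * (decompose 𝒜 f (q - q) : A) :=
    DirectSum.coe_decompose_mul_of_left_mem_of_le 𝒜 hu le_rfl
  rw [h, Nat.sub_self] at h1
  have hf0 : (decompose 𝒜 f 0 : A) ∈ Submodule.span k ({1} : Set A) := by
    rw [← hconn]; exact SetLike.coe_mem _
  obtain ⟨c, hc⟩ := Submodule.mem_span_singleton.mp hf0
  have h2 : u * (c • (1:A)) = 0 := by
    rw [hc]
    simpa using h1.symm
  have h3 : c • u = 0 := by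
    rw [mul_smul_comm, mul_one] at h2; exact h2
  have hc0 : c = 0 := by
    by_contra hne
    exact hu0 (by simpa [hne] using congrArg (fun t => c⁻¹ • t) h3)
  rw [← hc, hc0, zero_smul]

end PartA

section Poincare
variable {k A : Type*} [Field k] [Ring A] [Algebra k A]
variable (𝒜 : ℕ → Submodule k A) [GradedAlgebra 𝒜] {N : ℕ}
variable {e : A →ₗ[k] k}
variable (hconn : 𝒜 0 = Submodule.span k ({1} : Set A))
variable (hvan : ∀ m, N < m → 𝒜 m = ⊥)
variable (hevan : ∀ m, m ≠ N → ∀ x ∈ 𝒜 m, e x = 0)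
variable (hpair : ∀ q, q ≤ N →
      (∀ x ∈ 𝒜 q, x ≠ 0 → ∃ y ∈ 𝒜 (N - q), e (x * y) ≠ 0) ∧
      (∀ y ∈ 𝒜 (N - q), y ≠ 0 → ∃ x ∈ 𝒜 q, e (x * y) ≠ 0))

include hconn hevan hpair in
/-- L2': a top-degree element killed by `e` is zero. -/
lemma top_eq_zero_of_e_eq_zero {w : A} (hw : w ∈ 𝒜 N) (hew : e w = 0) : w = 0 := by
  by_contra hne
  obtain ⟨y, hy, hey⟩ := (hpair N le_rfl).1 w hw hne
  rw [Nat.sub_self] at hy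
  have hy' : y ∈ Submodule.span k ({1} : Set A) := by rw [← hconn]; exact hy
  obtain ⟨c, hc⟩ := Submodule.mem_span_singleton.mp hy'
  apply hey
  rw [← hc, mul_smul_comm, mul_one, map_smul, hew, smul_zero]

include hconn hevan hpair in
/-- L2 symmetric form: `𝒜 N` is one-dimensional. -/
lemma top_proportional {w ω : A} (hw : w ∈ 𝒜 N) (hω : ω ∈ 𝒜 N) :
    (e ω) • w = (e w) • ω := by
  have hv : (e ω) • w - (e w) • ω ∈ 𝒜 N := sub_mem (Submodule.smul_mem _ _ hw) (Submodule.smul_mem _ _ hω)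
  have hev : e ((e ω) • w - (e w) • ω) = 0 := by
    rw [map_sub, map_smul, map_smul, smul_eq_mul, smul_eq_mul, mul_comm]; ring
  have h0 := top_eq_zero_of_e_eq_zero 𝒜 hconn hevan hpair hv hev
  exact sub_eq_zero.mp h0

include hvan hevan hpair in
/-- L3': homogeneous nondegeneracy. -/
lemma exists_pairing_homog {s : ℕ} (hs : s ≤ N) {x : A} (hx : x ∈ 𝒜 s) (hx0 : x ≠ 0) :
    ∃ a ∈ 𝒜 (N - s), e (a * x) ≠ 0 := by
  have h := (hpair (N - s) (Nat.sub_le _ _)).2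
  rw [Nat.sub_sub_self hs] at h
  exact h x hx hx0

include hvan hevan hpair in
/-- L3: for any nonzero `x` there is `a` with `e (a * x) ≠ 0`. -/
lemma exists_mul_pair_ne_zero {x : A} (hx0 : x ≠ 0) : ∃ a : A, e (a * x) ≠ 0 := by
  classical
  have hsupp : (DFinsupp.support (decompose 𝒜 x)).Nonempty := by
    by_contra hempty
    rw [Finset.not_nonempty_iff_eq_empty] at hempty
    apply hx0
    conv_lhs => rw [← DirectSum.sum_support_decompose 𝒜 x]
    rw [hempty, Finset.sum_empty]
  set q := (DFinsupp.support (decompose 𝒜 x)).min' hsupp with hqdef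
  have hqmem : q ∈ DFinsupp.support (decompose 𝒜 x) := Finset.min'_mem _ _
  have hxq0 : (decompose 𝒜 x q : A) ≠ 0 := by
    intro hz
    rw [DFinsupp.mem_support_iff] at hqmem
    exact hqmem (Subtype.ext hz)
  have hxq : (decompose 𝒜 x q : A) ∈ 𝒜 q := SetLike.coe_mem _
  have hqN : q ≤ N := by
    by_contra hqN
    have hmem : ∀ w : A, w ∈ 𝒜 q → w = 0 := fun w hw => by
      rw [hvan q (not_le.mp hqN)] at hw; simpa using hw
    exact hxq0 (hmem _ hxq)
  obtain ⟨a, ha, hea⟩ := exists_pairing_homog 𝒜 hvan hevan hpair hqN hxq hxq0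
  refine ⟨a, ?_⟩
  have hkey : e (a * x) = e (a * (decompose 𝒜 x q : A)) := by
    conv_lhs => rw [← DirectSum.sum_support_decompose 𝒜 x]
    rw [Finset.mul_sum, map_sum]
    rw [Finset.sum_eq_single_of_mem q hqmem]
    intro i hi hne
    apply hevan (N - q + i) ?_ _ (SetLike.mul_mem_graded ha (SetLike.coe_mem _))
    have hqi : q ≤ i := Finset.min'_le _ _ hi
    intro hEq
    -- N - q + i = N with i ≥ q, i ≠ q impossible
    omega
  rw [hkey]; exact hea

end Poincare

section Pfilt
variable {k A : Type*} [Field k] [Ring A] [Algebra k A]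
variable (𝒜 : ℕ → Submodule k A) [GradedAlgebra 𝒜]

/-- The part of `A` in degrees `≥ t`. -/
def Pfilt (t : ℕ) : Submodule k A :=
  Submodule.span k {x | ∃ s, t ≤ s ∧ x ∈ 𝒜 s}

lemma mem_Pfilt_of_mem {t s : ℕ} (h : t ≤ s) {x : A} (hx : x ∈ 𝒜 s) : x ∈ Pfilt 𝒜 t :=
  Submodule.subset_span ⟨s, h, hx⟩

lemma Pfilt_mul {t t' : ℕ} {x y : A} (hx : x ∈ Pfilt 𝒜 t) (hy : y ∈ Pfilt 𝒜 t') :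
    x * y ∈ Pfilt 𝒜 (t + t') := by
  induction hx using Submodule.span_induction with
  | mem x hxg =>
    obtain ⟨s, hts, hxs⟩ := hxg
    induction hy using Submodule.span_induction with
    | mem y hyg =>
      obtain ⟨s', hts', hys⟩ := hyg
      exact mem_Pfilt_of_mem 𝒜 (by omega) (SetLike.mul_mem_graded hxs hys)
    | zero => rw [mul_zero]; exact zero_mem _
    | add y y' _ _ h1 h2 => rw [mul_add]; exact add_mem h1 h2
    | smul c y _ h1 => rw [mul_smul_comm]; exact Submodule.smul_mem _ _ h1
  | zero => rw [zero_mul]; exact zero_mem _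
  | add x x' _ _ h1 h2 => rw [add_mul]; exact add_mem h1 h2
  | smul c x _ h1 => rw [smul_mul_assoc]; exact Submodule.smul_mem _ _ h1

lemma Pfilt_eq_bot {t : ℕ} {N : ℕ} (hvan : ∀ m, N < m → 𝒜 m = ⊥) (ht : N < t) :
    Pfilt 𝒜 t = ⊥ := by
  rw [Pfilt, Submodule.span_eq_bot]
  rintro x ⟨s, hts, hxs⟩
  have : 𝒜 s = ⊥ := hvan s (lt_of_lt_of_le ht hts)
  rw [this] at hxs; simpa using hxs

lemma mem_Pfilt_one_of_zero_comp {f : A} (h : (decompose 𝒜 f 0 : A) = 0) :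
    f ∈ Pfilt 𝒜 1 := by
  classical
  rw [← DirectSum.sum_support_decompose 𝒜 f]
  apply Submodule.sum_mem
  intro i hi
  have hi0 : i ≠ 0 := by
    intro h0; rw [DFinsupp.mem_support_iff] at hi; rw [h0] at hi
    exact hi (Subtype.ext h)
  exact mem_Pfilt_of_mem 𝒜 (by omega) (SetLike.coe_mem _)

end Pfilt

section Cancel
variable {k A : Type*} [Field k] [Ring A] [Algebra k A]
variable (𝒜 : ℕ → Submodule k A) [GradedAlgebra 𝒜]

theorem smulCommClass_tower (R Y : Type*) [Semiring R] [Algebra k R]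
    [AddCommMonoid Y] [Module k Y] [Module R Y] [IsScalarTower k R Y] :
    SMulCommClass k R Y := by
  constructor
  intro c f y
  have h1 : c • (f • y) = (c • f) • y := (smul_assoc c f y).symm
  have h2 : f • (c • y) = (c • f) • y := by
    have : c • y = (c • (1:R)) • y := by rw [smul_assoc, one_smul]
    rw [this, ← mul_smul, mul_smul_comm, mul_one]
  rw [h1, h2]

variable (E : Subalgebra k A)
variable (Y : Type*) [AddCommGroup Y] [Module k Y] [Module ↥E Y] [IsScalarTower k ↥E Y]

/-- span of `J^t`-multiples in `Y`. -/
def Qf (t : ℕ) : Submodule k Y :=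
  Submodule.span k {y : Y | ∃ f : ↥E, (f : A) ∈ Pfilt 𝒜 t ∧ ∃ y' : Y, y = f • y'}

lemma Qf_bot {N t : ℕ} (hvan : ∀ m, N < m → 𝒜 m = ⊥) (ht : N < t) : Qf 𝒜 E Y t = ⊥ := by
  rw [Qf, Submodule.span_eq_bot]
  rintro y ⟨f, hf, y', rfl⟩
  rw [Pfilt_eq_bot 𝒜 hvan ht] at hf
  have : f = 0 := Subtype.ext (by simpa using hf)
  rw [this, zero_smul]

lemma smul_mem_Qf {t t' : ℕ} (f : ↥E) (hf : (f : A) ∈ Pfilt 𝒜 t) {y : Y}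
    (hy : y ∈ Qf 𝒜 E Y t') : f • y ∈ Qf 𝒜 E Y (t + t') := by
  haveI := smulCommClass_tower (k := k) ↥E Y
  induction hy using Submodule.span_induction with
  | mem y hyg =>
    obtain ⟨g, hg, y', rfl⟩ := hyg
    refine Submodule.subset_span ⟨f * g, ?_, y', by rw [mul_smul]⟩
    exact_mod_cast Pfilt_mul 𝒜 hf hg
  | zero => rw [smul_zero]; exact zero_mem _
  | add a b _ _ h1 h2 => rw [smul_add]; exact add_mem h1 h2
  | smul c a _ h1 => rw [smul_comm]; exact Submodule.smul_mem _ _ h1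

end Cancel

section CancelMain
variable {k A : Type*} [Field k] [Ring A] [Algebra k A]
variable (𝒜 : ℕ → Submodule k A) [GradedAlgebra 𝒜]

theorem cancel_free {N : ℕ}
    (hconn : 𝒜 0 = Submodule.span k ({1} : Set A))
    (hvan : ∀ m, N < m → 𝒜 m = ⊥)
    (E : Subalgebra k A)
    (X Y : Type*) [AddCommGroup X] [Module ↥E X] [Module.Free ↥E X]
    [AddCommGroup Y] [Module k Y] [Module ↥E Y] [IsScalarTower k ↥E Y]
    [FiniteDimensional k Y]
    (i : Y →ₗ[↥E] X) (p : X →ₗ[↥E] Y) (hpi : ∀ y, p (i y) = y) :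
    Module.Free ↥E Y := by
  classical
  haveI := smulCommClass_tower (k := k) ↥E Y
  obtain ⟨C, hC⟩ := Submodule.exists_isCompl (Qf 𝒜 E Y 1)
  set ι := Fin (Module.finrank k ↥C) with hι
  let bC : Module.Basis ι k ↥C := Module.finBasis k ↥C
  let xi : ι → Y := fun j => (bC j : Y)
  let φ : (ι →₀ ↥E) →ₗ[↥E] Y := Finsupp.linearCombination ↥E xi
  -- each xi lies in range φ
  have hxi_mem : ∀ j, xi j ∈ LinearMap.range φ := by
    intro j
    exact ⟨Finsupp.single j 1, by simp [φ]⟩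
  -- SURJECTIVITY
  have hbase : ⊤ ≤ (LinearMap.range φ).restrictScalars k ⊔ Qf 𝒜 E Y 1 := by
    rw [← hC.sup_eq_top]
    apply sup_le
    · -- Qf 1 ≤ sup
      exact le_sup_right
    · -- C ≤ range
      intro y hy
      apply Submodule.mem_sup_left
      have : y = ∑ j, bC.repr ⟨y, hy⟩ j • xi j := by
        have h := bC.sum_repr ⟨y, hy⟩
        calc y = ((⟨y, hy⟩ : ↥C) : Y) := rfl
          _ = ((∑ j, bC.repr ⟨y, hy⟩ j • bC j : ↥C) : Y) := by rw [h]
          _ = ∑ j, bC.repr ⟨y, hy⟩ j • xi j := by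
              push_cast [xi]
              rfl
      rw [this]
      exact Submodule.sum_mem _ fun j _ =>
        Submodule.smul_mem _ _ (by exact hxi_mem j)
  have hstep : ∀ t : ℕ, Qf 𝒜 E Y t ≤ (LinearMap.range φ).restrictScalars k ⊔ Qf 𝒜 E Y (t + 1) := by
    intro t
    rw [Qf, Submodule.span_le]
    rintro y ⟨f, hf, y', rfl⟩
    have hy' : y' ∈ (LinearMap.range φ).restrictScalars k ⊔ Qf 𝒜 E Y 1 := hbase trivial
    obtain ⟨τ, hτ, q, hq, rfl⟩ := Submodule.mem_sup.mp hy'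
    rw [smul_add]
    apply Submodule.add_mem
    · apply Submodule.mem_sup_left
      obtain ⟨v, rfl⟩ := hτ
      exact ⟨f • v, by rw [map_smul]⟩
    · exact Submodule.mem_sup_right (smul_mem_Qf 𝒜 E Y f hf hq)
  have hsurjsub : ∀ jj : ℕ, ⊤ ≤ (LinearMap.range φ).restrictScalars k ⊔ Qf 𝒜 E Y (1 + jj) := by
    intro jj
    induction jj with
    | zero => simpa using hbase
    | succ n ih =>
      refine le_trans ih (sup_le le_sup_left (le_trans (hstep (1 + n)) ?_))
      rw [show 1 + n + 1 = 1 + (n+1) by omega]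
  have hsurj : Function.Surjective φ := by
    have h1 : ⊤ ≤ (LinearMap.range φ).restrictScalars k ⊔ Qf 𝒜 E Y (1 + N) := hsurjsub N
    rw [Qf_bot 𝒜 E Y hvan (by omega), sup_bot_eq] at h1
    rw [← LinearMap.range_eq_top]
    exact eq_top_iff.mpr h1
  -- SECTION through free X
  let bX := Module.Free.chooseBasis ↥E X
  have hchoice : ∀ b : Module.Free.ChooseBasisIndex ↥E X, ∃ v : ι →₀ ↥E, φ v = p (bX b) :=
    fun b => hsurj (p (bX b))
  let η : X →ₗ[↥E] (ι →₀ ↥E) := bX.constr ℕ fun b => (hchoice b).choose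
  have hφη : φ ∘ₗ η = p := by
    apply bX.ext
    intro b
    simp only [LinearMap.comp_apply, η, Module.Basis.constr_basis]
    exact (hchoice b).choose_spec
  let ℓ : Y →ₗ[↥E] (ι →₀ ↥E) := η ∘ₗ i
  have hφℓ : ∀ y, φ (ℓ y) = y := by
    intro y
    have := congrArg (fun g => g (i y)) hφη
    simpa [ℓ, hpi] using this
  let πW : (ι →₀ ↥E) →ₗ[↥E] (ι →₀ ↥E) := LinearMap.id - ℓ ∘ₗ φ
  have hπW_ker : ∀ v, φ (πW v) = 0 := by
    intro v; simp [πW, hφℓ]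
  have hπW_fix : ∀ v, φ v = 0 → πW v = v := by
    intro v hv; simp [πW, hv]
  -- coordinates of kernel elements are in Pfilt 1
  have hcoord : ∀ v : ι →₀ ↥E, φ v = 0 → ∀ j : ι, ((v j : ↥E) : A) ∈ Pfilt 𝒜 1 := by
    intro v hv j
    -- decompose coordinates
    have hc : ∀ j : ι, ∃ c : k, (decompose 𝒜 ((v j : ↥E) : A) 0 : A) = c • (1 : A) := by
      intro j
      have hm : (decompose 𝒜 ((v j : ↥E) : A) 0 : A) ∈ Submodule.span k ({1} : Set A) := by
        rw [← hconn]; exact SetLike.coe_mem _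
      obtain ⟨c, hc⟩ := Submodule.mem_span_singleton.mp hm
      exact ⟨c, hc.symm⟩
    choose c hcspec using hc
    -- w j := v j - c j • 1 has zero 0-component
    have hw : ∀ j : ι, ((v j - c j • (1 : ↥E) : ↥E) : A) ∈ Pfilt 𝒜 1 := by
      intro j
      apply mem_Pfilt_one_of_zero_comp
      have hco : ((v j - c j • (1 : ↥E) : ↥E) : A) = ((v j : ↥E) : A) - c j • (1 : A) := by
        push_cast; ring
      have : gproj 𝒜 0 (((v j - c j • (1 : ↥E) : ↥E) : A)) = 0 := by
        rw [hco, map_sub, map_smul, gproj_apply, gproj_apply,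
          decompose_of_mem_same 𝒜 (SetLike.one_mem_graded 𝒜), hcspec j, sub_self]
      exact this
    -- use the kernel relation to show the scalar parts vanish
    have hφv : (0 : Y) = ∑ jj, ((v jj : ↥E)) • xi jj := by
      rw [← hv]
      rw [show φ v = v.sum fun i r => r • xi i from Finsupp.linearCombination_apply _ _]
      rw [Finsupp.sum_fintype]
      intro i; exact zero_smul _ _
    have hsplit : ∀ jj : ι, ((v jj : ↥E)) • xi jj
        = c jj • xi jj + ((v jj - c jj • (1 : ↥E) : ↥E)) • xi jj := by
      intro jj
      rw [sub_smul]
      have h1 : (c jj • (1 : ↥E)) • xi jj = c jj • xi jj := by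
        rw [smul_assoc, one_smul]
      rw [h1]; abel
    have hsum2 : (0 : Y) = (∑ jj, c jj • xi jj) + ∑ jj, ((v jj - c jj • (1 : ↥E) : ↥E)) • xi jj := by
      rw [hφv]
      rw [← Finset.sum_add_distrib]
      exact Finset.sum_congr rfl fun jj _ => hsplit jj
    have hSA_memC : (∑ jj, c jj • xi jj) ∈ C := by
      have : (∑ jj, c jj • xi jj) = ((∑ jj, c jj • bC jj : ↥C) : Y) := by
        push_cast
        rfl
      rw [this]; exact SetLike.coe_mem _
    have hSB_mem : (∑ jj, ((v jj - c jj • (1 : ↥E) : ↥E)) • xi jj) ∈ Qf 𝒜 E Y 1 :=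
      Submodule.sum_mem _ fun jj _ => Submodule.subset_span ⟨_, hw jj, _, rfl⟩
    have hSA0 : (∑ jj, c jj • xi jj) = 0 := by
      have hmemQ : (∑ jj, c jj • xi jj) ∈ Qf 𝒜 E Y 1 := by
        have : (∑ jj, c jj • xi jj) = - ∑ jj, ((v jj - c jj • (1 : ↥E) : ↥E)) • xi jj := by
          rw [eq_neg_iff_add_eq_zero]; exact hsum2.symm
        rw [this]; exact neg_mem hSB_mem
      exact (Submodule.mem_bot k).mp (hC.disjoint.le_bot ⟨hmemQ, hSA_memC⟩)
    have hc0 : ∀ jj, c jj = 0 := by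
      have hsumC : (∑ jj, c jj • bC jj : ↥C) = 0 := by
        apply Subtype.ext
        push_cast
        exact hSA0
      exact fun jj => Fintype.linearIndependent_iff.mp bC.linearIndependent c hsumC jj
    have := hw j
    rw [hc0 j, zero_smul, sub_zero] at this
    exact this
  -- kernel chain
  have hexp : ∀ w : ι →₀ ↥E, φ w = 0 → w = ∑ jj, (w jj) • πW (Finsupp.single jj 1) := by
    intro w hwk
    have h1 : w = ∑ jj, (w jj) • (Finsupp.single jj (1:↥E)) := by
      conv_lhs => rw [← Finsupp.univ_sum_single w]
      exact Finset.sum_congr rfl fun jj _ => by rw [Finsupp.smul_single', mul_one]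
    calc w = πW w := (hπW_fix w hwk).symm
      _ = ∑ jj, (w jj) • πW (Finsupp.single jj 1) := by
          conv_lhs => rw [h1]
          rw [map_sum]
          exact Finset.sum_congr rfl fun jj _ => by rw [map_smul]
  set Rt : ℕ → Submodule k (ι →₀ ↥E) := fun t =>
    Submodule.span k {y | ∃ f : ↥E, (f : A) ∈ Pfilt 𝒜 t ∧ ∃ w, φ w = 0 ∧ y = f • w} with hRt
  haveI := smulCommClass_tower (k := k) ↥E (ι →₀ ↥E)
  have hker1 : ∀ w : ι →₀ ↥E, φ w = 0 → w ∈ Rt 1 := by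
    intro w hwk
    rw [hexp w hwk]
    exact Submodule.sum_mem _ fun jj _ =>
      Submodule.subset_span ⟨w jj, hcoord w hwk jj, πW (Finsupp.single jj 1), hπW_ker _, rfl⟩
  have hker2 : ∀ t, Rt t ≤ Rt (t + 1) := by
    intro t
    rw [hRt]
    rw [Submodule.span_le]
    rintro y ⟨f, hf, w, hwk, rfl⟩
    rw [hexp w hwk]
    rw [Finset.smul_sum]
    apply Submodule.sum_mem
    intro jj _
    rw [smul_smul]
    refine Submodule.subset_span ⟨f * w jj, ?_, πW (Finsupp.single jj 1), hπW_ker _, rfl⟩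
    exact_mod_cast Pfilt_mul 𝒜 hf (hcoord w hwk jj)
  have hkerbot : ∀ jjn : ℕ, ∀ w : ι →₀ ↥E, φ w = 0 → w ∈ Rt (1 + jjn) := by
    intro jjn
    induction jjn with
    | zero => exact fun w hwk => hker1 w hwk
    | succ n ih =>
      intro w hwk
      have := hker2 (1 + n) (ih w hwk)
      rwa [show 1 + n + 1 = 1 + (n + 1) by omega] at this
  have hinj : Function.Injective φ := by
    rw [← LinearMap.ker_eq_bot]
    apply (Submodule.eq_bot_iff _).mpr
    intro w hwk
    rw [LinearMap.mem_ker] at hwk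
    have hmem := hkerbot N w hwk
    have hbot : Rt (1 + N) = ⊥ := by
      rw [hRt, Submodule.span_eq_bot]
      rintro y ⟨f, hf, w', hwk', rfl⟩
      rw [Pfilt_eq_bot 𝒜 hvan (by omega)] at hf
      have : f = 0 := Subtype.ext (by simpa using hf)
      rw [this, zero_smul]
    rw [hbot] at hmem
    simpa using hmem
  exact Module.Free.of_equiv (LinearEquiv.ofBijective φ ⟨hinj, hsurj⟩)

end CancelMain

section Main
variable {k A : Type*} [Field k] [Ring A] [Algebra k A]
variable (𝒜 : ℕ → Submodule k A) [GradedAlgebra 𝒜]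
variable {M : Type*} [AddCommGroup M] [Module k M] [Module A M] [IsScalarTower k A M]
variable (ℳ : ℤ → Submodule k M) [DirectSum.Decomposition ℳ]

/-- projection of a product-smul, with lower bound on module degrees inside `X`. -/
lemma proj_smul_mem_span
    (X : Submodule A M)
    (hXgr : ∀ x ∈ X, ∀ j : ℤ, (DirectSum.decompose ℳ x j : M) ∈ X)
    {μ : ℤ} (hmin : ∀ j : ℤ, j < μ → ∀ x ∈ X, x ∈ ℳ j → x = 0)
    (hgradedSMul : ∀ (i : ℕ) (j : ℤ), ∀ a ∈ 𝒜 i, ∀ x ∈ ℳ j, a • x ∈ ℳ ((i : ℤ) + j))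
    {r : A} (hr0 : (decompose 𝒜 r 0 : A) = 0) {y : M} (hyX : y ∈ X) (D : ℤ) :
    gproj ℳ D (r • y) ∈ Submodule.span k
      {w : M | ∃ (s : ℕ) (j : ℤ), 1 ≤ s ∧ μ ≤ j ∧ (s:ℤ) + j = D ∧
        ∃ v : M, v ∈ ℳ j ∧ w = (decompose 𝒜 r s : A) • v} := by
  classical
  have hry : r • y = ∑ s ∈ DFinsupp.support (decompose 𝒜 r),
      ∑ j ∈ DFinsupp.support (decompose ℳ y),
        (decompose 𝒜 r s : A) • (decompose ℳ y j : M) := by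
    conv_lhs => rw [← DirectSum.sum_support_decompose 𝒜 r, ← DirectSum.sum_support_decompose ℳ y]
    rw [Finset.sum_smul]
    exact Finset.sum_congr rfl fun s _ => by rw [Finset.smul_sum]
  rw [hry, map_sum]
  apply Submodule.sum_mem
  intro s hs
  rw [map_sum]
  apply Submodule.sum_mem
  intro j hj
  have hs1 : 1 ≤ s := by
    rcases Nat.eq_zero_or_pos s with h0 | h; swap; · exact h
    exfalso
    rw [DFinsupp.mem_support_iff] at hs
    exact hs (by rw [h0]; exact Subtype.ext hr0)
  have hmem : (decompose 𝒜 r s : A) • (decompose ℳ y j : M) ∈ ℳ ((s:ℤ) + j) :=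
    hgradedSMul s j _ (SetLike.coe_mem _) _ (SetLike.coe_mem _)
  by_cases hjμ : j < μ
  · have hy0 : (decompose ℳ y j : M) = 0 :=
      hmin j hjμ _ (hXgr y hyX j) (SetLike.coe_mem _)
    rw [hy0, smul_zero, map_zero]
    exact zero_mem _
  · push_neg at hjμ
    by_cases hD : (s:ℤ) + j = D
    · rw [gproj_apply, decompose_of_mem_same ℳ (hD ▸ hmem)]
      exact Submodule.subset_span ⟨s, j, hs1, hjμ, hD, _, SetLike.coe_mem _, rfl⟩
    · rw [gproj_apply, decompose_of_mem_ne ℳ hmem hD]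
      exact zero_mem _

end Main
section Main2
variable {k A : Type*} [Field k] [Ring A] [Algebra k A]
variable (𝒜 : ℕ → Submodule k A) [GradedAlgebra 𝒜]
variable {M : Type*} [AddCommGroup M] [Module k M] [Module A M] [IsScalarTower k A M]
variable (ℳ : ℤ → Submodule k M) [DirectSum.Decomposition ℳ]

lemma coords_span_of_homog_kill
    (hconn : 𝒜 0 = Submodule.span k ({1} : Set A))
    (E : Subalgebra k A)
    (hEgr : ∀ x ∈ E, ∀ i : ℕ, (DirectSum.decompose 𝒜 x i : A) ∈ E)
    (X : Submodule A M)
    (hXgr : ∀ x ∈ X, ∀ j : ℤ, (DirectSum.decompose ℳ x j : M) ∈ X)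
    {μ : ℤ} (hmin : ∀ j : ℤ, j < μ → ∀ x ∈ X, x ∈ ℳ j → x = 0)
    (hgradedSMul : ∀ (i : ℕ) (j : ℤ), ∀ a ∈ 𝒜 i, ∀ x ∈ ℳ j, a • x ∈ ℳ ((i : ℤ) + j))
    (hfree : Module.Free ↥E ↥X)
    {x : ↥X} {u : A} {q : ℕ} (huE : u ∈ E) (hu : u ∈ 𝒜 q) (hu0 : u ≠ 0)
    (hux : u • (x : M) = 0) {D : ℤ} (hxdeg : (x : M) ∈ ℳ D) :
    (x : M) ∈ Submodule.span k
      {w : M | ∃ (g : A) (s : ℕ) (j : ℤ), g ∈ E ∧ g ∈ 𝒜 s ∧ 1 ≤ s ∧ μ ≤ j ∧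
        (s:ℤ) + j = D ∧ ∃ v : M, w = g • v} := by
  classical
  haveI := hfree
  let b := Module.Free.chooseBasis ↥E ↥X
  set u' : ↥E := ⟨u, huE⟩ with hu'
  have hsm : u' • x = (0 : ↥X) := by
    apply Subtype.ext
    show ((u' • x : ↥X) : M) = ((0 : ↥X) : M)
    have h1 : ((u' • x : ↥X) : M) = u • (x : M) := rfl
    rw [h1, hux]; rfl
  have hrep : u' • b.repr x = 0 := by
    rw [← map_smul, hsm, map_zero]
  have hcoordz : ∀ i, u' * (b.repr x i) = 0 := by
    intro i
    have h3 := congrArg (fun f => f i) hrep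
    simp only [Finsupp.smul_apply, Finsupp.coe_zero, Pi.zero_apply, smul_eq_mul] at h3
    exact h3
  have hzc : ∀ i, (decompose 𝒜 ((b.repr x i : ↥E) : A) 0 : A) = 0 := by
    intro i
    apply zero_comp_of_homog_mul_eq_zero 𝒜 hconn hu hu0
    have := congrArg (Subtype.val) (hcoordz i)
    simpa using this
  have hxs : (x : M) = ∑ i ∈ (b.repr x).support, ((b.repr x i : ↥E) : A) • ((b i : ↥X) : M) := by
    have h1 := b.linearCombination_repr x
    rw [Finsupp.linearCombination_apply, Finsupp.sum] at h1
    calc (x : M) = ((∑ i ∈ (b.repr x).support, b.repr x i • b i : ↥X) : M) := by rw [h1]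
      _ = ∑ i ∈ (b.repr x).support, ((b.repr x i : ↥E) : A) • ((b i : ↥X) : M) := by
          rw [show ((∑ i ∈ (b.repr x).support, b.repr x i • b i : ↥X) : M)
              = ∑ i ∈ (b.repr x).support, ((b.repr x i • b i : ↥X) : M) from by push_cast; rfl]
          exact Finset.sum_congr rfl fun i _ => rfl
  have hproj : (x : M) = gproj ℳ D (x : M) := by
    rw [gproj_apply, decompose_of_mem_same ℳ hxdeg]
  rw [hproj, hxs, map_sum]
  apply Submodule.sum_mem
  intro i _
  have hmem := proj_smul_mem_span 𝒜 ℳ X hXgr hmin hgradedSMul (hzc i)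
    (SetLike.coe_mem (b i)) D
  refine Submodule.span_le.mpr ?_ hmem
  rintro w ⟨s, j, hs1, hjμ, hsj, v, hv, rfl⟩
  exact Submodule.subset_span
    ⟨(decompose 𝒜 ((b.repr x i : ↥E) : A) s : A), s, j,
      hEgr _ (SetLike.coe_mem _) s, SetLike.coe_mem _, hs1, hjμ, hsj, v, rfl⟩

end Main2
section Main3
variable {k A : Type*} [Field k] [Ring A] [Algebra k A]
variable (𝒜 : ℕ → Submodule k A) [GradedAlgebra 𝒜]
variable {M : Type*} [AddCommGroup M] [Module k M] [Module A M] [IsScalarTower k A M]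
variable (ℳ : ℤ → Submodule k M) [DirectSum.Decomposition ℳ]

/-- Step (3a): a nonzero homogeneous element of a graded subalgebra acts
nontrivially on a minimal-degree element. -/
lemma homog_smul_min_ne_zero
    (hconn : 𝒜 0 = Submodule.span k ({1} : Set A))
    (E : Subalgebra k A)
    (hEgr : ∀ x ∈ E, ∀ i : ℕ, (DirectSum.decompose 𝒜 x i : A) ∈ E)
    (X : Submodule A M)
    (hXgr : ∀ x ∈ X, ∀ j : ℤ, (DirectSum.decompose ℳ x j : M) ∈ X)
    {μ : ℤ} (hmin : ∀ j : ℤ, j < μ → ∀ x ∈ X, x ∈ ℳ j → x = 0)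
    (hgradedSMul : ∀ (i : ℕ) (j : ℤ), ∀ a ∈ 𝒜 i, ∀ x ∈ ℳ j, a • x ∈ ℳ ((i : ℤ) + j))
    (hfree : Module.Free ↥E ↥X)
    {m : M} (hmX : m ∈ X) (hmdeg : m ∈ ℳ μ) (hm0 : m ≠ 0)
    {u : A} {q : ℕ} (huE : u ∈ E) (hu : u ∈ 𝒜 q) (hu0 : u ≠ 0) :
    u • m ≠ 0 := by
  intro hux
  have hx : ((⟨m, hmX⟩ : ↥X) : M) ∈ Submodule.span k
      {w : M | ∃ (g : A) (s : ℕ) (j : ℤ), g ∈ E ∧ g ∈ 𝒜 s ∧ 1 ≤ s ∧ μ ≤ j ∧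
        (s:ℤ) + j = μ ∧ ∃ v : M, w = g • v} :=
    coords_span_of_homog_kill 𝒜 ℳ hconn E hEgr X hXgr hmin hgradedSMul hfree
      huE hu hu0 (by simpa using hux) (by simpa using hmdeg)
  have hbot : Submodule.span k
      {w : M | ∃ (g : A) (s : ℕ) (j : ℤ), g ∈ E ∧ g ∈ 𝒜 s ∧ 1 ≤ s ∧ μ ≤ j ∧
        (s:ℤ) + j = μ ∧ ∃ v : M, w = g • v} ≤ ⊥ := by
    rw [Submodule.span_le]
    rintro w ⟨g, s, j, _, _, hs1, hjμ, hsj, v, rfl⟩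
    exfalso; omega
  exact hm0 (by simpa using hbot hx)

/-- Step (3b)+(3a): the key nonvanishing. -/
lemma key_smul_ne_zero
    (hconn : 𝒜 0 = Submodule.span k ({1} : Set A))
    {E₁ E₂ : Subalgebra k A}
    (hE₁gr : ∀ x ∈ E₁, ∀ i : ℕ, (DirectSum.decompose 𝒜 x i : A) ∈ E₁)
    (hE₂gr : ∀ x ∈ E₂, ∀ i : ℕ, (DirectSum.decompose 𝒜 x i : A) ∈ E₂)
    (X : Submodule A M)
    (hXgr : ∀ x ∈ X, ∀ j : ℤ, (DirectSum.decompose ℳ x j : M) ∈ X)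
    {μ : ℤ} (hmin : ∀ j : ℤ, j < μ → ∀ x ∈ X, x ∈ ℳ j → x = 0)
    (hgradedSMul : ∀ (i : ℕ) (j : ℤ), ∀ a ∈ 𝒜 i, ∀ x ∈ ℳ j, a • x ∈ ℳ ((i : ℤ) + j))
    (hfree₁ : Module.Free ↥E₁ ↥X) (hfree₂ : Module.Free ↥E₂ ↥X)
    {m : M} (hmX : m ∈ X) (hmdeg : m ∈ ℳ μ) (hm0 : m ≠ 0)
    {t₁ : A} {d₁ : ℕ} (ht₁deg : t₁ ∈ 𝒜 d₁)
    {z : A} {dz : ℕ} (hzE : z ∈ E₂) (hzdeg : z ∈ 𝒜 dz)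
    (hzsq : z * z = 0) (hzt₁E : z * t₁ ∈ E₁) (hzt₁0 : z * t₁ ≠ 0)
    (hbig : ∀ d : ℕ, 0 < d → ∀ y ∈ E₂, y ∈ 𝒜 d → y ≠ 0 →
      (¬ ∃ c : k, y = c • z) → d₁ < d)
    {ω₂ : A} {n₂ : ℕ} (hω₂E : ω₂ ∈ E₂) (hω₂deg : ω₂ ∈ 𝒜 n₂) (hω₂0 : ω₂ ≠ 0) :
    (ω₂ * t₁) • m ≠ 0 := by
  have hzt1m : (z * t₁) • m ≠ 0 :=
    homog_smul_min_ne_zero 𝒜 ℳ hconn E₁ hE₁gr X hXgr hmin hgradedSMul hfree₁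
      hmX hmdeg hm0 hzt₁E (SetLike.mul_mem_graded hzdeg ht₁deg) hzt₁0
  intro hcontra
  rw [mul_smul] at hcontra
  -- z-multiples submodule
  let Zmap : M →ₗ[k] M :=
    { toFun := fun x => z • x
      map_add' := fun a b => smul_add z a b
      map_smul' := fun c x => by
        simp only [RingHom.id_apply]
        exact (smul_comm c z x).symm }
  have hx : ((t₁ • ⟨m, hmX⟩ : ↥X) : M) ∈ Submodule.span k
      {w : M | ∃ (g : A) (s : ℕ) (j : ℤ), g ∈ E₂ ∧ g ∈ 𝒜 s ∧ 1 ≤ s ∧ μ ≤ j ∧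
        (s:ℤ) + j = (d₁ : ℤ) + μ ∧ ∃ v : M, w = g • v} := by
    refine coords_span_of_homog_kill 𝒜 ℳ hconn E₂ hE₂gr X hXgr hmin hgradedSMul hfree₂
      hω₂E hω₂deg hω₂0 ?_ ?_
    · show ω₂ • (t₁ • m) = 0
      exact hcontra
    · show t₁ • m ∈ ℳ ((d₁ : ℤ) + μ)
      exact hgradedSMul d₁ μ t₁ ht₁deg m hmdeg
  have hle : Submodule.span k
      {w : M | ∃ (g : A) (s : ℕ) (j : ℤ), g ∈ E₂ ∧ g ∈ 𝒜 s ∧ 1 ≤ s ∧ μ ≤ j ∧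
        (s:ℤ) + j = (d₁ : ℤ) + μ ∧ ∃ v : M, w = g • v} ≤ LinearMap.range Zmap := by
    rw [Submodule.span_le]
    rintro w ⟨g, s, j, hgE, hgs, hs1, hjμ, hsj, v, rfl⟩
    by_cases hg0 : g = 0
    · exact ⟨0, by simp [Zmap, hg0]⟩
    · have hsd1 : s ≤ d₁ := by omega
      have hcz : ∃ c : k, g = c • z := by
        by_contra hnc
        have := hbig s (by omega) g hgE hgs hg0 hnc
        omega
      obtain ⟨c, rfl⟩ := hcz
      exact ⟨c • v, by simp [Zmap, smul_comm c z v, smul_smul]⟩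
  obtain ⟨v₀, hv₀⟩ := hle hx
  have hcoe : ((t₁ • (⟨m, hmX⟩ : ↥X) : ↥X) : M) = t₁ • m := rfl
  have ht1m : t₁ • m = z • v₀ := by rw [← hcoe, ← hv₀]; rfl
  apply hzt1m
  rw [mul_smul, ht1m, ← mul_smul, hzsq, zero_smul]

end Main3
section Main4
variable {k A : Type*} [Field k] [Ring A] [Algebra k A]
variable (𝒜 : ℕ → Submodule k A) [GradedAlgebra 𝒜]
variable {M : Type*} [AddCommGroup M] [Module k M] [Module A M] [IsScalarTower k A M]
variable (ℳ : ℤ → Submodule k M) [DirectSum.Decomposition ℳ]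

lemma gproj_smul_homog
    (hgradedSMul : ∀ (i : ℕ) (j : ℤ), ∀ a ∈ 𝒜 i, ∀ x ∈ ℳ j, a • x ∈ ℳ ((i : ℤ) + j))
    (w : A) {μ : ℤ} {m : M} (hm : m ∈ ℳ μ) (i : ℕ) :
    gproj ℳ ((i:ℤ) + μ) (w • m) = (decompose 𝒜 w i : A) • m := by
  classical
  conv_lhs => rw [← DirectSum.sum_support_decompose 𝒜 w]
  rw [Finset.sum_smul, map_sum]
  have hterm : ∀ s ∈ DFinsupp.support (decompose 𝒜 w),
      gproj ℳ ((i:ℤ) + μ) ((decompose 𝒜 w s : A) • m)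
        = if s = i then (decompose 𝒜 w i : A) • m else 0 := by
    intro s _
    have hsm : (decompose 𝒜 w s : A) • m ∈ ℳ ((s:ℤ) + μ) :=
      hgradedSMul s μ _ (SetLike.coe_mem _) m hm
    by_cases h : s = i
    · subst h
      rw [gproj_apply, decompose_of_mem_same ℳ hsm, if_pos rfl]
    · rw [gproj_apply, decompose_of_mem_ne ℳ hsm (by exact_mod_cast fun hc => h (by omega)),
        if_neg h]
  rw [Finset.sum_congr rfl hterm, Finset.sum_ite_eq' _ i _]
  by_cases hmem : i ∈ DFinsupp.support (decompose 𝒜 w)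
  · rw [if_pos hmem]
  · rw [if_neg hmem]
    rw [DFinsupp.notMem_support_iff] at hmem
    rw [show (decompose 𝒜 w i : A) = 0 from by rw [hmem]; rfl, zero_smul]

variable {N : ℕ} {e : A →ₗ[k] k}

include 𝒜 in
lemma e_mul_decompose
    (hevan : ∀ m, m ≠ N → ∀ x ∈ 𝒜 m, e x = 0)
    {p : ℕ} (hp : p ≤ N) {a : A} (ha : a ∈ 𝒜 p) (b : A) :
    e (a * b) = e (a * (decompose 𝒜 b (N - p) : A)) := by
  classical
  conv_lhs => rw [← DirectSum.sum_support_decompose 𝒜 b]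
  rw [Finset.mul_sum, map_sum]
  have hterm : ∀ s ∈ DFinsupp.support (decompose 𝒜 b),
      e (a * (decompose 𝒜 b s : A)) = if s = N - p then e (a * (decompose 𝒜 b (N-p) : A)) else 0 := by
    intro s _
    by_cases h : s = N - p
    · subst h; rw [if_pos rfl]
    · rw [if_neg h]
      exact hevan (p + s) (by omega) _ (SetLike.mul_mem_graded ha (SetLike.coe_mem _))
  rw [Finset.sum_congr rfl hterm, Finset.sum_ite_eq' _ (N-p) _]
  by_cases hmem : N - p ∈ DFinsupp.support (decompose 𝒜 b)
  · rw [if_pos hmem]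
  · rw [if_neg hmem]
    rw [DFinsupp.notMem_support_iff] at hmem
    rw [show (decompose 𝒜 b (N-p) : A) = 0 from by rw [hmem]; rfl, mul_zero, map_zero]

include 𝒜 in
lemma e_topcomp
    (hevan : ∀ m, m ≠ N → ∀ x ∈ 𝒜 m, e x = 0) (b : A) :
    e b = e (decompose 𝒜 b N : A) := by
  have h := e_mul_decompose 𝒜 (e := e) hevan (Nat.zero_le N) (SetLike.one_mem_graded 𝒜) b
  rw [Nat.sub_zero] at h
  simpa using h
end Main4
section Main5
variable {k A : Type*} [Field k] [Ring A] [Algebra k A] [FiniteDimensional k A]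
variable (𝒜 : ℕ → Submodule k A) [GradedAlgebra 𝒜]
variable {M : Type*} [AddCommGroup M] [Module k M] [Module A M] [IsScalarTower k A M]
variable (ℳ : ℤ → Submodule k M) [DirectSum.Decomposition ℳ]
variable {N : ℕ} {e : A →ₗ[k] k}

set_option maxHeartbeats 1000000 in
lemma split_off_free
    (hconn : 𝒜 0 = Submodule.span k ({1} : Set A))
    (hvan : ∀ m, N < m → 𝒜 m = ⊥)
    (hevan : ∀ m, m ≠ N → ∀ x ∈ 𝒜 m, e x = 0)
    (hpair : ∀ q, q ≤ N →
      (∀ x ∈ 𝒜 q, x ≠ 0 → ∃ y ∈ 𝒜 (N - q), e (x * y) ≠ 0) ∧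
      (∀ y ∈ 𝒜 (N - q), y ≠ 0 → ∃ x ∈ 𝒜 q, e (x * y) ≠ 0))
    (hgradedSMul : ∀ (i : ℕ) (j : ℤ), ∀ a ∈ 𝒜 i, ∀ x ∈ ℳ j, a • x ∈ ℳ ((i : ℤ) + j))
    (X : Submodule A M)
    (hXgr : ∀ x ∈ X, ∀ j : ℤ, (DirectSum.decompose ℳ x j : M) ∈ X)
    {μ : ℤ} {m : M} (hmX : m ∈ X) (hmdeg : m ∈ ℳ μ)
    {ω : A} (hω : ω ∈ 𝒜 N) (heω : e ω ≠ 0) (hωm : ω • m ≠ 0) :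
    ∃ K : Submodule A M, K ≤ X ∧ (∀ x ∈ K, ∀ j : ℤ, (DirectSum.decompose ℳ x j : M) ∈ K) ∧
      ∃ Ψe : (A × ↥K) ≃ₗ[A] ↥X, ∀ p : A × ↥K, ((Ψe p : ↥X) : M) = p.1 • m + (p.2 : M) := by
  classical
  -- every nonzero element acts nontrivially on m
  have hann : ∀ a : A, a ≠ 0 → a • m ≠ 0 := by
    intro a ha0 hma
    obtain ⟨a', hea⟩ := exists_mul_pair_ne_zero 𝒜 hvan hevan hpair ha0
    have hwm : (a' * a) • m = 0 := by rw [mul_smul, hma, smul_zero]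
    have hwN : (decompose 𝒜 (a' * a) N : A) • m = 0 := by
      have h1 := gproj_smul_homog 𝒜 ℳ hgradedSMul (a' * a) hmdeg N
      rw [hwm, map_zero] at h1
      exact h1.symm
    have heN : e (decompose 𝒜 (a' * a) N : A) ≠ 0 := by
      rw [← e_topcomp 𝒜 hevan]; exact hea
    have hprop := top_proportional 𝒜 hconn hevan hpair
      (SetLike.coe_mem (decompose 𝒜 (a' * a) N)) hω
    have hkey : (e ω) • ((decompose 𝒜 (a' * a) N : A) • m)
        = e (decompose 𝒜 (a' * a) N : A) • (ω • m) := by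
      rw [← smul_assoc, hprop, smul_assoc]
    rw [hwN, smul_zero] at hkey
    have hzero : ω • m = 0 := by
      have h5 : (e (decompose 𝒜 (a' * a) N : A))⁻¹ • (e (decompose 𝒜 (a' * a) N : A)) • (ω • m) = 0 := by
        rw [← hkey, smul_zero]
      rwa [smul_smul, inv_mul_cancel₀ heN, one_smul] at h5
    exact hωm hzero
  -- functional ψ₀ with ψ₀ (w • m) = e w for top-degree w
  have hj₀inj : Function.Injective
      (fun w : ↥(𝒜 N) => ((w : A) • m : M)) := by
    intro w w' hww
    have hww' : (w : A) • m = (w' : A) • m := hww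
    by_contra hne
    have hsub : ((w : A) - (w' : A)) • m = 0 := by
      rw [sub_smul, hww', sub_self]
    have h2 := hann ((w : A) - (w' : A)) (fun hc => hne (Subtype.ext (by
      have h3 := sub_eq_zero.mp hc; exact_mod_cast h3)))
    exact h2 hsub
  -- the linear map version
  let j₀ : ↥(𝒜 N) →ₗ[k] M :=
    ((LinearMap.toSpanSingleton A M m).restrictScalars k) ∘ₗ (𝒜 N).subtype
  have hj₀ : ∀ w : ↥(𝒜 N), j₀ w = (w : A) • m := fun w => rfl
  have hj₀ker : LinearMap.ker j₀ = ⊥ := by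
    rw [LinearMap.ker_eq_bot]
    intro w w' h
    exact hj₀inj (by simpa [hj₀] using h)
  obtain ⟨g0, hg0⟩ := j₀.exists_leftInverse_of_injective hj₀ker
  let ψ₀ : M →ₗ[k] k := e ∘ₗ (𝒜 N).subtype ∘ₗ g0
  have hψ₀ : ∀ w : A, ∀ hw : w ∈ 𝒜 N, ψ₀ (w • m) = e w := by
    intro w hw
    have h1 := congrArg (fun f => f (⟨w, hw⟩ : ↥(𝒜 N))) hg0
    simp only [LinearMap.comp_apply, LinearMap.id_apply] at h1
    show e ((g0 (w • m) : A)) = e w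
    have h2 : j₀ ⟨w, hw⟩ = w • m := rfl
    rw [← h2, h1]
  let ψ : M →ₗ[k] k := ψ₀ ∘ₗ gproj ℳ ((N:ℤ) + μ)
  have hP1 : ∀ a : A, ψ (a • m) = e a := by
    intro a
    show ψ₀ (gproj ℳ ((N:ℤ) + μ) (a • m)) = e a
    rw [gproj_smul_homog 𝒜 ℳ hgradedSMul a hmdeg N,
      hψ₀ _ (SetLike.coe_mem _), ← e_topcomp 𝒜 hevan]
  -- the Frobenius pairing
  let Bθ : A →ₗ[k] A →ₗ[k] k := LinearMap.mk₂ k (fun a b => e (a * b))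
    (fun a a' b => by show e ((a + a') * b) = e (a * b) + e (a' * b); rw [add_mul, map_add])
    (fun c a b => by show e ((c • a) * b) = c • e (a * b); rw [smul_mul_assoc, map_smul, smul_eq_mul])
    (fun a b b' => by show e (a * (b + b')) = e (a * b) + e (a * b'); rw [mul_add, map_add])
    (fun c a b => by show e (a * (c • b)) = c • e (a * b); rw [mul_smul_comm, map_smul, smul_eq_mul])
  let Θ : A →ₗ[k] Module.Dual k A := Bθ.flip
  have hΘapp : ∀ b a : A, Θ b a = e (a * b) := fun b a => rfl
  have hΘ0 : ∀ b : A, Θ b = 0 → b = 0 := by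
    intro b hb
    by_contra hb0
    obtain ⟨a, hea⟩ := exists_mul_pair_ne_zero 𝒜 hvan hevan hpair hb0
    exact hea (by rw [← hΘapp b a, hb]; rfl)
  have hΘinj : Function.Injective Θ := by
    rw [← LinearMap.ker_eq_bot]
    exact (Submodule.eq_bot_iff _).mpr fun b hb => hΘ0 b hb
  have hΘsurj : Function.Surjective Θ :=
    (LinearMap.injective_iff_surjective_of_finrank_eq_finrank
      (Subspace.dual_finrank_eq).symm).mp hΘinj
  let Θe : A ≃ₗ[k] Module.Dual k A := LinearEquiv.ofBijective Θ ⟨hΘinj, hΘsurj⟩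
  let F : M →ₗ[k] Module.Dual k A := (LinearMap.mk₂ k (fun (a : A) (x : M) => ψ (a • x))
    (fun a a' x => by show ψ ((a + a') • x) = ψ (a • x) + ψ (a' • x); rw [add_smul, map_add])
    (fun c a x => by show ψ ((c • a) • x) = c • ψ (a • x); rw [smul_assoc, map_smul, smul_eq_mul])
    (fun a x x' => by show ψ (a • (x + x')) = ψ (a • x) + ψ (a • x'); rw [smul_add, map_add])
    (fun c a x => by show ψ (a • (c • x)) = c • ψ (a • x); rw [smul_comm a c x, map_smul, smul_eq_mul])).flip
  have hFapp : ∀ (x : M) (a : A), F x a = ψ (a • x) := fun x a => rfl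
  let lam : M →ₗ[k] A := Θe.symm.toLinearMap ∘ₗ F
  have hΘlam : ∀ x : M, Θ (lam x) = F x := by
    intro x
    show Θ (Θe.symm (F x)) = F x
    exact Θe.apply_symm_apply (F x)
  have hlam_e : ∀ (x : M) (a : A), e (a * lam x) = ψ (a • x) := by
    intro x a
    rw [← hΘapp, hΘlam, hFapp]
  have hlmul : ∀ (c : A) (x : M), lam (c • x) = c * lam x := by
    intro c x
    apply hΘinj
    apply LinearMap.ext
    intro a
    rw [hΘapp, hΘapp, hlam_e, ← mul_assoc, hlam_e, smul_smul]
  have hlm1 : lam m = 1 := by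
    apply hΘinj
    apply LinearMap.ext
    intro a
    rw [hΘapp, hΘapp, hlam_e, hP1, mul_one]
  -- the A-linear projection
  let ρ : M →ₗ[A] M :=
    { toFun := fun x => lam x • m
      map_add' := fun x y => by
        show lam (x + y) • m = lam x • m + lam y • m
        rw [map_add, add_smul]
      map_smul' := fun c x => by
        simp only [RingHom.id_apply]
        show lam (c • x) • m = c • (lam x • m)
        rw [hlmul, mul_smul] }
  have hρapp : ∀ x : M, ρ x = lam x • m := fun x => rfl
  have hρm : ∀ a : A, ρ (a • m) = a • m := by
    intro a
    rw [hρapp, hlmul, hlm1, mul_one]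
  have hρρ : ∀ x : M, ρ (ρ x) = ρ x := by
    intro x
    rw [hρapp x, hρm]
  have hρgr : ∀ (j : ℤ) (x : M), x ∈ ℳ j → ρ x ∈ ℳ j := by
    intro j x hx
    have hFvan : ∀ (p : ℕ), ((p:ℤ) + j ≠ (N:ℤ) + μ) → ∀ a ∈ 𝒜 p, e (a * lam x) = 0 := by
      intro p hp a ha
      rw [hlam_e]
      show ψ₀ (gproj ℳ ((N:ℤ) + μ) (a • x)) = 0
      rw [gproj_apply, decompose_of_mem_ne ℳ (hgradedSMul p j a ha x hx) hp, map_zero]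
    have hbcomp : ∀ s : ℕ, ((s:ℤ) ≠ j - μ) → (decompose 𝒜 (lam x) s : A) = 0 := by
      intro s hs
      by_cases hsN : s ≤ N
      · by_contra hbs0
        obtain ⟨a, ha, hea⟩ :=
          exists_pairing_homog 𝒜 hvan hevan hpair hsN (SetLike.coe_mem _) hbs0
        have h2 : e (a * lam x) = e (a * (decompose 𝒜 (lam x) (N - (N - s)) : A)) :=
          e_mul_decompose 𝒜 hevan (Nat.sub_le N s) ha (lam x)
        rw [Nat.sub_sub_self hsN] at h2
        have h3 : e (a * lam x) = 0 := by
          apply hFvan (N - s) ?_ a ha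
          have hc : ((N - s : ℕ) : ℤ) = (N : ℤ) - (s : ℤ) := by
            push_cast [Nat.cast_sub hsN]; ring
          omega
        rw [h3] at h2; exact hea h2.symm
      · have hb : 𝒜 s = ⊥ := hvan s (by omega)
        have hz : ∀ w : A, w ∈ 𝒜 s → w = 0 := fun w hw => by
          rw [hb] at hw; simpa using hw
        exact hz _ (SetLike.coe_mem _)
    -- hence ρ x ∈ ℳ j
    have hrw : lam x • m = ∑ s ∈ DFinsupp.support (decompose 𝒜 (lam x)),
        (decompose 𝒜 (lam x) s : A) • m := by
      conv_lhs => rw [← DirectSum.sum_support_decompose 𝒜 (lam x)]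
      rw [Finset.sum_smul]
    rw [hρapp, hrw]
    apply Submodule.sum_mem
    intro s hsupp
    have hs0 : (decompose 𝒜 (lam x) s : A) ≠ 0 := by
      rw [DFinsupp.mem_support_iff] at hsupp
      exact fun hc => hsupp (Subtype.ext hc)
    have hseq : (s:ℤ) = j - μ := by
      by_contra hne
      exact hs0 (hbcomp s hne)
    have := hgradedSMul s μ _ (SetLike.coe_mem (decompose 𝒜 (lam x) s)) m hmdeg
    rwa [show (s:ℤ) + μ = j by omega] at this
  -- the complement
  refine ⟨X ⊓ LinearMap.ker ρ, inf_le_left, ?_, ?_⟩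
  · intro x hx j
    obtain ⟨hxX, hxker⟩ := Submodule.mem_inf.mp hx
    rw [Submodule.mem_inf]
    refine ⟨hXgr x hxX j, ?_⟩
    rw [LinearMap.mem_ker] at hxker ⊢
    -- ρ of the component vanishes
    have hsum : ∑ j' ∈ DFinsupp.support (decompose ℳ x), ρ (decompose ℳ x j' : M) = 0 := by
      rw [← map_sum, DirectSum.sum_support_decompose ℳ x, hxker]
    by_cases hmem : j ∈ DFinsupp.support (decompose ℳ x)
    · have hterm : ∀ j' ∈ DFinsupp.support (decompose ℳ x), j' ≠ j →
          gproj ℳ j (ρ (decompose ℳ x j' : M)) = 0 := by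
        intro j' _ hne
        rw [gproj_apply, decompose_of_mem_ne ℳ (hρgr j' _ (SetLike.coe_mem _)) hne]
      have h6 := congrArg (gproj ℳ j) hsum
      rw [map_sum, map_zero] at h6
      rw [Finset.sum_eq_single_of_mem j hmem (fun j' h1 h2 => hterm j' h1 h2)] at h6
      rwa [gproj_apply, decompose_of_mem_same ℳ (hρgr j _ (SetLike.coe_mem _))] at h6
    · rw [DFinsupp.notMem_support_iff] at hmem
      rw [show ((decompose ℳ x j : M)) = 0 from by rw [hmem]; rfl, map_zero]
  · -- the equivalence A × K ≃ X
    let Ψ : (A × ↥(X ⊓ LinearMap.ker ρ)) →ₗ[A] ↥X :=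
      { toFun := fun p => ⟨p.1 • m + (p.2 : M),
          add_mem (X.smul_mem p.1 hmX) (Submodule.mem_inf.mp p.2.2).1⟩
        map_add' := fun p q => Subtype.ext (by
          show (p.1 + q.1) • m + ((p.2 + q.2 : ↥(X ⊓ LinearMap.ker ρ)) : M)
            = (p.1 • m + (p.2 : M)) + (q.1 • m + (q.2 : M))
          rw [add_smul, Submodule.coe_add]
          abel)
        map_smul' := fun c p => Subtype.ext (by
          show (c • p.1) • m + ((c • p.2 : ↥(X ⊓ LinearMap.ker ρ)) : M)
            = c • (p.1 • m + (p.2 : M))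
          rw [smul_eq_mul, mul_smul, Submodule.coe_smul, smul_add]) }
    have hΨbij : Function.Bijective Ψ := by
      constructor
      · rw [← LinearMap.ker_eq_bot]
        apply (Submodule.eq_bot_iff _).mpr
        rintro ⟨a, y⟩ hp
        rw [LinearMap.mem_ker] at hp
        have hp' : a • m + (y : M) = 0 := congrArg Subtype.val hp
        have hρp : ρ (a • m + (y : M)) = 0 := by rw [hp', map_zero]
        rw [map_add, hρm, (LinearMap.mem_ker).mp (Submodule.mem_inf.mp y.2).2, add_zero] at hρp
        have ha0 : a = 0 := by
          by_contra hne
          exact hann a hne hρp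
        have hy0 : (y : M) = 0 := by rw [ha0, zero_smul, zero_add] at hp'; exact hp'
        have : y = 0 := Subtype.ext hy0
        rw [Prod.mk_eq_zero]
        exact ⟨ha0, this⟩
      · intro x
        have hmemX : ρ (x : M) ∈ X := by
          rw [hρapp]; exact X.smul_mem _ hmX
        refine ⟨(lam (x : M), ⟨(x : M) - ρ (x : M), Submodule.mem_inf.mpr
          ⟨sub_mem x.2 hmemX, (LinearMap.mem_ker).mpr (by rw [map_sub, hρρ, sub_self])⟩⟩), ?_⟩
        apply Subtype.ext
        show lam (x : M) • m + ((x : M) - ρ (x : M)) = (x : M)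
        rw [← hρapp]
        abel
    exact ⟨LinearEquiv.ofBijective Ψ hΨbij, fun p => rfl⟩

end Main5
section Main6
variable {k A : Type*} [Field k] [Ring A] [Algebra k A] [FiniteDimensional k A]
variable (𝒜 : ℕ → Submodule k A) [GradedAlgebra 𝒜]
variable {M : Type*} [AddCommGroup M] [Module k M] [Module A M] [IsScalarTower k A M]
variable (ℳ : ℤ → Submodule k M) [DirectSum.Decomposition ℳ]
variable {N : ℕ} {e : A →ₗ[k] k}

set_option maxHeartbeats 1000000 in
lemma aux_free [FiniteDimensional k M]
    (hconn : 𝒜 0 = Submodule.span k ({1} : Set A))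
    (hvan : ∀ m, N < m → 𝒜 m = ⊥)
    (hevan : ∀ m, m ≠ N → ∀ x ∈ 𝒜 m, e x = 0)
    (hpair : ∀ q, q ≤ N →
      (∀ x ∈ 𝒜 q, x ≠ 0 → ∃ y ∈ 𝒜 (N - q), e (x * y) ≠ 0) ∧
      (∀ y ∈ 𝒜 (N - q), y ≠ 0 → ∃ x ∈ 𝒜 q, e (x * y) ≠ 0))
    {E₁ E₂ : Subalgebra k A}
    (hE₁gr : ∀ x ∈ E₁, ∀ i : ℕ, (DirectSum.decompose 𝒜 x i : A) ∈ E₁)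
    (hE₂gr : ∀ x ∈ E₂, ∀ i : ℕ, (DirectSum.decompose 𝒜 x i : A) ∈ E₂)
    (hgradedSMul : ∀ (i : ℕ) (j : ℤ), ∀ a ∈ 𝒜 i, ∀ x ∈ ℳ j, a • x ∈ ℳ ((i : ℤ) + j))
    (hbounded : ∃ b : ℤ, ∀ j : ℤ, j < b → ℳ j = ⊥)
    {t₁ : A} {d₁ : ℕ} (ht₁deg : t₁ ∈ 𝒜 d₁)
    {z : A} {dz : ℕ} (hzE : z ∈ E₂) (hzdeg : z ∈ 𝒜 dz)
    (hzsq : z * z = 0) (hzt₁E : z * t₁ ∈ E₁) (hzt₁0 : z * t₁ ≠ 0)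
    (hbig : ∀ d : ℕ, 0 < d → ∀ y ∈ E₂, y ∈ 𝒜 d → y ≠ 0 →
      (¬ ∃ c : k, y = c • z) → d₁ < d)
    {ω₂ : A} {n₂ : ℕ} (hω₂E : ω₂ ∈ E₂) (hω₂deg : ω₂ ∈ 𝒜 n₂) (hω₂0 : ω₂ ≠ 0)
    {d₂ : ℕ} (hd₂ : d₂ ≤ n₂) (hdeg : d₁ + d₂ = N) :
    ∀ (n : ℕ) (X : Submodule A M),
      Module.finrank k ↥X ≤ n →
      (∀ x ∈ X, ∀ j : ℤ, (DirectSum.decompose ℳ x j : M) ∈ X) →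
      Module.Free ↥E₁ ↥X → Module.Free ↥E₂ ↥X → Module.Free A ↥X := by
  intro n
  induction n with
  | zero =>
    intro X hrank _ _ _
    haveI : FiniteDimensional k ↥X :=
      inferInstanceAs (FiniteDimensional k ↥(X.restrictScalars k))
    have h0 : Module.finrank k ↥X = 0 := Nat.le_zero.mp hrank
    haveI : Subsingleton ↥X := Module.finrank_zero_iff.mp h0
    exact Module.Free.of_subsingleton A ↥X
  | succ n ih =>
    intro X hrank hXgr hfree₁ hfree₂
    by_cases hsub : ∀ x : ↥X, x = 0
    · haveI : Subsingleton ↥X := ⟨fun a b => by rw [hsub a, hsub b]⟩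
      exact Module.Free.of_subsingleton A ↥X
    push_neg at hsub
    obtain ⟨x₀, hx₀⟩ := hsub
    classical
    -- minimal degree
    set P : ℤ → Prop := fun j => ∃ y : M, y ∈ X ∧ y ∈ ℳ j ∧ y ≠ 0 with hP
    have hPne : ∃ j, P j := by
      have hx₀M : (x₀ : M) ≠ 0 := fun hc => hx₀ (Subtype.ext hc)
      have hsupp : (DFinsupp.support (decompose ℳ (x₀ : M))).Nonempty := by
        by_contra hempty
        rw [Finset.not_nonempty_iff_eq_empty] at hempty
        apply hx₀M
        conv_lhs => rw [← DirectSum.sum_support_decompose ℳ (x₀ : M)]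
        rw [hempty, Finset.sum_empty]
      obtain ⟨j, hj⟩ := hsupp
      rw [DFinsupp.mem_support_iff] at hj
      exact ⟨j, (decompose ℳ (x₀ : M) j : M), hXgr _ x₀.2 j, SetLike.coe_mem _,
        fun hc => hj (Subtype.ext hc)⟩
    have hPbdd : ∃ b : ℤ, ∀ j, P j → b ≤ j := by
      obtain ⟨b, hb⟩ := hbounded
      refine ⟨b, fun j hj => ?_⟩
      by_contra hlt
      obtain ⟨y, _, hydeg, hy0⟩ := hj
      rw [hb j (by omega)] at hydeg
      exact hy0 (by simpa using hydeg)
    obtain ⟨μ, hPμ, hμleast⟩ := Int.exists_least_of_bdd hPbdd hPne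
    obtain ⟨m, hmX, hmdeg, hm0⟩ := hPμ
    have hmin : ∀ j : ℤ, j < μ → ∀ x ∈ X, x ∈ ℳ j → x = 0 := by
      intro j hj x hxX hxj
      by_contra hne
      have := hμleast j ⟨x, hxX, hxj, hne⟩
      omega
    -- the key nonvanishing
    have hkey : (ω₂ * t₁) • m ≠ 0 :=
      key_smul_ne_zero 𝒜 ℳ hconn hE₁gr hE₂gr X hXgr hmin hgradedSMul hfree₁ hfree₂
        hmX hmdeg hm0 ht₁deg hzE hzdeg hzsq hzt₁E hzt₁0 hbig hω₂E hω₂deg hω₂0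
    have hω0 : ω₂ * t₁ ≠ 0 := fun hc => hkey (by rw [hc, zero_smul])
    have hle : n₂ + d₁ ≤ N := by
      by_contra hgt
      have hb : 𝒜 (n₂ + d₁) = ⊥ := hvan _ (by omega)
      have hz : ∀ w : A, w ∈ 𝒜 (n₂ + d₁) → w = 0 := fun w hw => by
        rw [hb] at hw; simpa using hw
      exact hω0 (hz _ (SetLike.mul_mem_graded hω₂deg ht₁deg))
    have hNeq : n₂ + d₁ = N := by omega
    have hωA : ω₂ * t₁ ∈ 𝒜 N := by
      have := SetLike.mul_mem_graded hω₂deg ht₁deg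
      rwa [hNeq] at this
    have heω : e (ω₂ * t₁) ≠ 0 :=
      fun h0 => hω0 (top_eq_zero_of_e_eq_zero 𝒜 hconn hevan hpair hωA h0)
    -- split off a free rank-one summand
    obtain ⟨K, hKle, hKgr, Ψe, hΨe⟩ :=
      split_off_free 𝒜 ℳ hconn hvan hevan hpair hgradedSMul X hXgr hmX hmdeg hωA heω hkey
    haveI : Nontrivial A := ⟨⟨ω₂ * t₁, 0, hω0⟩⟩
    haveI : FiniteDimensional k ↥X :=
      inferInstanceAs (FiniteDimensional k ↥(X.restrictScalars k))
    haveI : FiniteDimensional k ↥K :=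
      inferInstanceAs (FiniteDimensional k ↥(K.restrictScalars k))
    -- rank bound
    have hrankK : Module.finrank k ↥K ≤ n := by
      have h1 : Module.finrank k (A × ↥K) = Module.finrank k ↥X :=
        (Ψe.restrictScalars k).finrank_eq
      rw [Module.finrank_prod] at h1
      have hApos : 0 < Module.finrank k A := Module.finrank_pos_iff.mpr inferInstance
      omega
    -- K is free over E₁ and E₂ by cancellation
    let iK : ↥K →ₗ[A] ↥X := Submodule.inclusion hKle
    let pK : ↥X →ₗ[A] ↥K := (LinearMap.snd A A ↥K) ∘ₗ Ψe.symm.toLinearMap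
    have hpiK : ∀ y : ↥K, pK (iK y) = y := by
      intro y
      have h2 : Ψe (0, y) = iK y := by
        apply Subtype.ext
        rw [hΨe (0, y)]
        show (0 : A) • m + ((y : M)) = ((y : M))
        rw [zero_smul, zero_add]
      have h3 : Ψe.symm (iK y) = (0, y) := by rw [← h2, LinearEquiv.symm_apply_apply]
      show (LinearMap.snd A A ↥K) (Ψe.symm (iK y)) = y
      rw [h3]
      rfl
    haveI := hfree₁
    haveI := hfree₂
    have hfreeK₁ : Module.Free ↥E₁ ↥K :=
      cancel_free 𝒜 hconn hvan E₁ ↥X ↥K (iK.restrictScalars ↥E₁) (pK.restrictScalars ↥E₁)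
        (fun y => hpiK y)
    have hfreeK₂ : Module.Free ↥E₂ ↥K :=
      cancel_free 𝒜 hconn hvan E₂ ↥X ↥K (iK.restrictScalars ↥E₂) (pK.restrictScalars ↥E₂)
        (fun y => hpiK y)
    -- recurse
    have hfreeKA : Module.Free A ↥K := ih K hrankK hKgr hfreeK₁ hfreeK₂
    haveI := hfreeKA
    exact Module.Free.of_equiv Ψe

end Main6

/-- the detection lemma, Lemma 4.10 of the paper.  Let `A` be a
finite-dimensional connected graded Poincaré algebra of top degree `N` over a field
`k`, and `E₁, E₂ ⊆ A` graded unital subalgebras that are themselves connected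
Poincaré algebras for the induced grading, with `A` free as a left module over each
of them.  Let `M` be a finitely generated graded left `A`-module (bounded below)
which is free over `E₁` and over `E₂`.  Suppose there are nonzero homogeneous
`t₁ ∈ E₁` of degree `d₁` and `t₂ ∈ E₂` of degree `d₂` with `d₁ + d₂ = N`, and that
every nonzero homogeneous `y ∈ E₂` of positive degree has degree `> d₁`, except
possibly for the nonzero scalar multiples of a fixed homogeneous `z ∈ E₂` with
`z² = 0`, `z·t₁ ∈ E₁` and `z·t₁ ≠ 0`.  Then `M` is a free left `A`-module. -/
theorem free_of_free_over_subalgebras (k A : Type*) [Field k] [Ring A] [Algebra k A]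
    [FiniteDimensional k A] (𝒜 : ℕ → Submodule k A) [GradedAlgebra 𝒜] (N : ℕ)
    (hA : IsConnectedPoincare k A 𝒜 N)
    (E₁ E₂ : Subalgebra k A)
    (hE₁graded : ∀ x ∈ E₁, ∀ i : ℕ, (DirectSum.decompose 𝒜 x i : A) ∈ E₁)
    (hE₂graded : ∀ x ∈ E₂, ∀ i : ℕ, (DirectSum.decompose 𝒜 x i : A) ∈ E₂)
    (hE₁P : ∃ n₁, SubalgebraIsConnectedPoincare k A 𝒜 E₁ n₁)
    (hE₂P : ∃ n₂, SubalgebraIsConnectedPoincare k A 𝒜 E₂ n₂)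
    (hAfree₁ : Module.Free ↥E₁ A) (hAfree₂ : Module.Free ↥E₂ A)
    (M : Type*) [AddCommGroup M] [Module k M] [Module A M] [IsScalarTower k A M]
    (hMfg : Module.Finite A M)
    (ℳ : ℤ → Submodule k M) [DirectSum.Decomposition ℳ]
    (hgradedSMul : ∀ (i : ℕ) (j : ℤ), ∀ a ∈ 𝒜 i, ∀ x ∈ ℳ j, a • x ∈ ℳ ((i : ℤ) + j))
    (hbounded : ∃ b : ℤ, ∀ j : ℤ, j < b → ℳ j = ⊥)
    (hMfree₁ : Module.Free ↥E₁ M) (hMfree₂ : Module.Free ↥E₂ M)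
    (t₁ t₂ : A) (d₁ d₂ : ℕ)
    (ht₁E : t₁ ∈ E₁) (ht₁deg : t₁ ∈ 𝒜 d₁) (ht₁0 : t₁ ≠ 0)
    (ht₂E : t₂ ∈ E₂) (ht₂deg : t₂ ∈ 𝒜 d₂) (ht₂0 : t₂ ≠ 0)
    (hdeg : d₁ + d₂ = N)
    (z : A) (dz : ℕ) (hzE : z ∈ E₂) (hzdeg : z ∈ 𝒜 dz)
    (hzsq : z * z = 0) (hzt₁E : z * t₁ ∈ E₁) (hzt₁0 : z * t₁ ≠ 0)
    (hbig : ∀ d : ℕ, 0 < d → ∀ y ∈ E₂, y ∈ 𝒜 d → y ≠ 0 →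
      (¬ ∃ c : k, y = c • z) → d₁ < d) :
    Module.Free A M := by
  classical
  haveI : Nontrivial A := ⟨⟨t₁, 0, ht₁0⟩⟩
  obtain ⟨hconn, hvan, e, hevan, hpair⟩ := hA
  obtain ⟨n₂, hconn₂, hvan₂, e₂, hevan₂, hpair₂⟩ := hE₂P
  -- a top class of E₂
  obtain ⟨ω₂, hω₂E, hω₂deg', he₂ω₂⟩ :=
    (hpair₂ 0 (Nat.zero_le n₂)).1 1 (one_mem E₂) (SetLike.one_mem_graded 𝒜) one_ne_zero
  rw [Nat.sub_zero] at hω₂deg'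
  have hω₂0 : ω₂ ≠ 0 := fun hc => he₂ω₂ (by rw [hc, mul_zero, map_zero])
  have hd₂ : d₂ ≤ n₂ := by
    by_contra hgt
    exact ht₂0 (hvan₂ d₂ (by omega) t₂ ht₂E ht₂deg)
  haveI : Module.Finite k M := Module.Finite.trans A M
  have haux := aux_free 𝒜 ℳ hconn hvan hevan hpair hE₁graded hE₂graded hgradedSMul hbounded
    ht₁deg hzE hzdeg hzsq hzt₁E hzt₁0 hbig hω₂E hω₂deg' hω₂0 hd₂ hdeg
    (Module.finrank k ↥(⊤ : Submodule A M)) ⊤ le_rfl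
    (fun x _ j => trivial)
    (Module.Free.of_equiv (Submodule.topEquiv.restrictScalars ↥E₁).symm)
    (Module.Free.of_equiv (Submodule.topEquiv.restrictScalars ↥E₂).symm)
  haveI := haux
  exact Module.Free.of_equiv (Submodule.topEquiv : ↥(⊤ : Submodule A M) ≃ₗ[A] M)
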